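/- Let V be a finite set of modules. All modules in V are pairwise non-overlapping if and only if Σ_{v_i ∈ V} ∬_{R_i} Σ_{v_j ∈ V} ρ_j(u,v) du dv = Σ_{v_i ∈ V} Area(R_i). -/

import Mathlib

open MeasureTheory

/-- the modules of a finite set `V` are pairwise non-overlapping iff
`Σ_{v_i ∈ V} ∬_{R_i} Σ_{v_j ∈ V} ρ_j = Σ_{v_i ∈ V} Area(R_i)`. -/
theorem pairwise_nonoverlap_iff_sum_integral_eq_sum_area
    {ι : Type*} [Fintype ι] (x y w h : ι → ℝ)
    (hw : ∀ i, 0 < w i) (hh : ∀ i, 0 < h i)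
    (R : ι → Set (ℝ × ℝ))
    (hR : ∀ i, R i =
      Set.Icc (x i - w i / 2) (x i + w i / 2) ×ˢ Set.Icc (y i - h i / 2) (y i + h i / 2)) :
    (∀ i j : ι, i ≠ j → volume (R i ∩ R j) = 0) ↔
      (∑ i, ∫ p in R i, ∑ j, (R j).indicator (fun _ => (1 : ℝ)) p) = ∑ i, w i * h i := by
  classical
  have meas : ∀ i, MeasurableSet (R i) := by
    intro i; rw [hR]; exact measurableSet_Icc.prod measurableSet_Icc
  have volR : ∀ i, volume (R i) = ENNReal.ofReal (w i) * ENNReal.ofReal (h i) := by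
    intro i
    rw [hR, Measure.volume_eq_prod, Measure.prod_prod, Real.volume_Icc, Real.volume_Icc]
    congr 1 <;> · congr 1; ring
  have vfin : ∀ i j, volume (R i ∩ R j) ≠ ⊤ := by
    intro i j
    refine ne_top_of_le_ne_top ?_ (measure_mono Set.inter_subset_left)
    rw [volR]
    exact ENNReal.mul_ne_top ENNReal.ofReal_ne_top ENNReal.ofReal_ne_top
  have key : ∀ i, (∫ p in R i, ∑ j, (R j).indicator (fun _ => (1 : ℝ)) p)
      = ∑ j, (volume (R i ∩ R j)).toReal := by
    intro i
    rw [integral_finset_sum]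
    · refine Finset.sum_congr rfl fun j _ => ?_
      rw [integral_indicator (meas j), setIntegral_const, measureReal_def,
        Measure.restrict_apply (meas j), Set.inter_comm, smul_eq_mul, mul_one]
    · intro j _
      rw [integrable_indicator_iff (meas j)]
      refine integrableOn_const (lt_top_iff_ne_top.1 ?_)
      rw [Measure.restrict_apply (meas j)]
      exact lt_top_iff_ne_top.2 (by rw [Set.inter_comm]; exact vfin i j)
  have diag : ∀ i, (volume (R i ∩ R i)).toReal = w i * h i := by
    intro i
    rw [Set.inter_self, volR, ENNReal.toReal_mul,
      ENNReal.toReal_ofReal (hw i).le, ENNReal.toReal_ofReal (hh i).le]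
  have split : ∀ i, (∑ j, (volume (R i ∩ R j)).toReal)
      = (∑ j ∈ Finset.univ \ {i}, (volume (R i ∩ R j)).toReal) + w i * h i := by
    intro i
    rw [← diag i]
    exact (Finset.sum_eq_sum_sdiff_singleton_add (Finset.mem_univ i) _)
  have main : (∑ i, ∫ p in R i, ∑ j, (R j).indicator (fun _ => (1 : ℝ)) p)
      = (∑ i, ∑ j ∈ Finset.univ \ {i}, (volume (R i ∩ R j)).toReal) + ∑ i, w i * h i := by
    rw [← Finset.sum_add_distrib]
    exact Finset.sum_congr rfl fun i _ => by rw [key i, split i]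
  rw [main]
  constructor
  · intro hov
    have : (∑ i, ∑ j ∈ Finset.univ \ {i}, (volume (R i ∩ R j)).toReal) = 0 := by
      refine Finset.sum_eq_zero fun i _ => Finset.sum_eq_zero fun j hj => ?_
      have hij : i ≠ j := by
        simp only [Finset.mem_sdiff, Finset.mem_singleton] at hj
        exact fun e => hj.2 e.symm
      rw [hov i j hij, ENNReal.toReal_zero]
    rw [this, zero_add]
  · intro heq
    have hz : (∑ i, ∑ j ∈ Finset.univ \ {i}, (volume (R i ∩ R j)).toReal) = 0 := by
      linarith [heq]
    intro i j hij
    have hnn : ∀ a ∈ (Finset.univ : Finset ι), 0 ≤ ∑ k ∈ Finset.univ \ {a}, (volume (R a ∩ R k)).toReal :=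
      fun a _ => Finset.sum_nonneg fun k _ => ENNReal.toReal_nonneg
    have hi := (Finset.sum_eq_zero_iff_of_nonneg hnn).1 hz i (Finset.mem_univ i)
    have hj : j ∈ Finset.univ \ ({i} : Finset ι) := by
      simp [Finset.mem_sdiff, hij.symm]
    have := (Finset.sum_eq_zero_iff_of_nonneg
      (fun k _ => ENNReal.toReal_nonneg)).1 hi j hj
    rcases (ENNReal.toReal_eq_zero_iff _).1 this with h0 | htop
    · exact h0
    · exact absurd htop (vfin i j)
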